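/- With β the evolute-direction curve defined by β' = sin(θ)N + cos(θ)B where θ' = τ along a unit-speed curve γ with curvature κ > 0, the curvatures satisfy κ = √(κ_β² + τ_β²) and τ = (κ_β²/(κ_β² + τ_β²))·(τ_β/κ_β)'. -/

import Mathlib

open Real

/-- with `κ_β = -κ sin θ`, `τ_β = κ cos θ` (θ' = τ), we have
`κ = √(κ_β² + τ_β²)` and `τ = (κ_β²/(κ_β²+τ_β²))·(τ_β/κ_β)'`. -/
theorem evolute_direction_curvatures_inverse
    (κ τ θ : ℝ → ℝ)
    (hκ : ∀ s, 0 < κ s)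
    (hθ : ∀ s, HasDerivAt θ (τ s) s)
    (hsin : ∀ s, sin (θ s) ≠ 0)
    (κβ τβ : ℝ → ℝ)
    (hκβ : ∀ s, κβ s = -(κ s) * sin (θ s))
    (hτβ : ∀ s, τβ s = κ s * cos (θ s)) :
    ∀ s, κ s = Real.sqrt (κβ s ^ 2 + τβ s ^ 2) ∧
      τ s = κβ s ^ 2 / (κβ s ^ 2 + τβ s ^ 2)
        * deriv (fun u => τβ u / κβ u) s := by
  intro s
  have hk := hκ s
  have hsum : κβ s ^ 2 + τβ s ^ 2 = κ s ^ 2 := by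
    rw [hκβ, hτβ]
    nlinarith [sin_sq_add_cos_sq (θ s)]
  constructor
  · rw [hsum, Real.sqrt_sq hk.le]
  · have hfun : (fun u => τβ u / κβ u) = fun u => -(cos (θ u) / sin (θ u)) := by
      funext u
      rw [hκβ, hτβ, neg_mul, div_neg, mul_div_mul_left _ _ (hκ u).ne']
    have h1 : HasDerivAt (fun u => cos (θ u)) (-sin (θ s) * τ s) s := (hθ s).cos
    have h2 : HasDerivAt (fun u => sin (θ u)) (cos (θ s) * τ s) s := (hθ s).sin
    have hdiv : HasDerivAt (fun u => -(cos (θ u) / sin (θ u))) _ s := (h1.div h2 (hsin s)).neg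
    have hval : -((-sin (θ s) * τ s * sin (θ s) - cos (θ s) * (cos (θ s) * τ s)) /
        sin (θ s) ^ 2) = τ s / sin (θ s) ^ 2 := by
      rw [← neg_div, div_eq_div_iff (pow_ne_zero 2 (hsin s)) (pow_ne_zero 2 (hsin s))]
      linear_combination (τ s * sin (θ s) ^ 2) * sin_sq_add_cos_sq (θ s)
    rw [hval] at hdiv
    rw [hfun, hdiv.deriv, hsum, hκβ]
    field_simp [hk.ne', hsin s]
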